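/- arXiv:1110.2449 — 3 statements merged into one kernel-verified Lean document; each statement's English description precedes it below -/
import Mathlib

section
/- Let A be a bounded linear operator on 𝓗 that preserves the form ω, i.e. ω(Au,Av) = ω(u,v) for all u,v ∈ 𝓗. Then the following are equivalent: (1) A is bijective (invertible); (2) A ∘ J ∘ A^T = J; (3) A^T preserves the form ω; (4) for all m, n ∈ ℤ∖{0}, Σ_{k≠0} sgn(mk)·A_{m,k}·A_{−n,−k} = δ_{m,n}. If in addition C∘A∘C = A, these are also equivalent to: (5) for all m, n ∈ ℤ∖{0}, Σ_{k≠0} sgn(mk)·A_{m,k}·conj(A_{n,k}) = δ_{m,n}. -/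
abbrev NZ : Type := {n : ℤ // n ≠ 0}
noncomputable abbrev Hsp : Type := lp (fun _ : NZ => ℂ) 2
def negNZ (n : NZ) : NZ := ⟨-n.1, neg_ne_zero.mpr n.2⟩
noncomputable def omegaB (u v : Hsp) : ℂ :=
  -∑' k : NZ, (k.1.sign : ℂ) * (u : ∀ _ : NZ, ℂ) k * (v : ∀ _ : NZ, ℂ) (negNZ k)
noncomputable def ent (A : Hsp →L[ℂ] Hsp) (m n : NZ) : ℂ :=
  (A (lp.single 2 n (1:ℂ)) : ∀ _ : NZ, ℂ) m

namespace SympAux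
open Complex
open scoped ENNReal

local notation "⟪" x ", " y "⟫" => @inner ℂ _ _ x y
local notation "conj'" => starRingEnd ℂ

lemma negNZ_invol (n : NZ) : negNZ (negNZ n) = n := by
  apply Subtype.ext; simp [negNZ]

def negE : NZ ≃ NZ := ⟨negNZ, negNZ, negNZ_invol, negNZ_invol⟩

lemma sign_cases (n : NZ) : ((n.1.sign : ℂ) = 1 ∨ (n.1.sign : ℂ) = -1) := by
  rcases n.2.lt_or_gt with h | h
  · right; rw [Int.sign_eq_neg_one_iff_neg.mpr h]; norm_num
  · left; rw [Int.sign_eq_one_iff_pos.mpr h]; norm_num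

lemma sign_sq (n : NZ) : (n.1.sign : ℂ) * (n.1.sign : ℂ) = 1 := by
  rcases sign_cases n with h | h <;> rw [h] <;> ring

lemma sign_ne_zero (n : NZ) : (n.1.sign : ℂ) ≠ 0 := by
  rcases sign_cases n with h | h <;> rw [h] <;> norm_num

lemma norm_sign (n : NZ) : ‖(n.1.sign : ℂ)‖ = 1 := by
  rcases sign_cases n with h | h <;> rw [h] <;> norm_num

lemma conj_sign (n : NZ) : conj' ((n.1.sign : ℂ)) = (n.1.sign : ℂ) := by
  rcases sign_cases n with h | h <;> rw [h] <;> norm_num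

lemma sign_negNZ (n : NZ) : (((negNZ n).1.sign : ℂ)) = -(n.1.sign : ℂ) := by
  show ((Int.sign (-n.1) : ℤ) : ℂ) = _
  rw [Int.sign_neg]; push_cast; ring

lemma single_apply' (i : NZ) (a : ℂ) (j : NZ) :
    (lp.single (E := fun _ : NZ => ℂ) 2 i a : ∀ _ : NZ, ℂ) j = if j = i then a else 0 := by
  rcases eq_or_ne j i with h | h
  · subst h; simp [lp.single_apply_self]
  · simp [lp.single_apply_ne _ _ _ h, h]

lemma mem_aux (u : Hsp) (f : NZ → ℂ)
    (h : ∀ k, ‖f k‖ = ‖(u : ∀ _ : NZ, ℂ) (negNZ k)‖) : Memℓp f 2 := by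
  apply memℓp_gen
  have h2 : (0:ℝ) < (2:ℝ≥0∞).toReal := by norm_num
  have hu : Summable (fun k : NZ => ‖(u : ∀ _ : NZ, ℂ) k‖ ^ (2:ℝ≥0∞).toReal) :=
    (memℓp_gen_iff h2).mp (lp.memℓp u)
  have h3 : Summable ((fun k : NZ => ‖(u : ∀ _ : NZ, ℂ) k‖ ^ (2:ℝ≥0∞).toReal) ∘ negE) :=
    (negE.summable_iff (f := fun k : NZ => ‖(u : ∀ _ : NZ, ℂ) k‖ ^ (2:ℝ≥0∞).toReal)).mpr hu
  exact h3.congr (fun k => by simp [Function.comp, negE, h k])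

noncomputable def C0 (u : Hsp) : Hsp :=
  ⟨fun k => conj' ((u : ∀ _ : NZ, ℂ) (negNZ k)),
   mem_aux u _ (fun k => by simp)⟩

lemma C0_apply (u : Hsp) (k : NZ) :
    (C0 u : ∀ _ : NZ, ℂ) k = conj' ((u : ∀ _ : NZ, ℂ) (negNZ k)) := rfl

noncomputable def Kc (u : Hsp) : Hsp :=
  ⟨fun k => (k.1.sign : ℂ) * conj' ((u : ∀ _ : NZ, ℂ) (negNZ k)),
   mem_aux u _ (fun k => by rw [norm_mul, norm_sign, one_mul]; simp)⟩

lemma Kc_apply (u : Hsp) (k : NZ) :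
    (Kc u : ∀ _ : NZ, ℂ) k = (k.1.sign : ℂ) * conj' ((u : ∀ _ : NZ, ℂ) (negNZ k)) := rfl


lemma C0_add (u v : Hsp) : C0 (u + v) = C0 u + C0 v := by
  apply lp.ext; funext k
  simp only [C0_apply, lp.coeFn_add, Pi.add_apply, map_add]

lemma C0_sub (u v : Hsp) : C0 (u - v) = C0 u - C0 v := by
  apply lp.ext; funext k
  simp only [C0_apply, lp.coeFn_sub, Pi.sub_apply, map_sub]

lemma C0_neg (u : Hsp) : C0 (-u) = -(C0 u) := by
  apply lp.ext; funext k
  simp only [C0_apply, lp.coeFn_neg, Pi.neg_apply, map_neg]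

lemma C0_invol (u : Hsp) : C0 (C0 u) = u := by
  apply lp.ext; funext k
  simp only [C0_apply, negNZ_invol, Complex.conj_conj]

lemma C0_smul (c : ℂ) (u : Hsp) : C0 (c • u) = (conj' c) • C0 u := by
  apply lp.ext; funext k
  simp only [C0_apply, lp.coeFn_smul, Pi.smul_apply, smul_eq_mul, map_mul]

lemma Kc_add (u v : Hsp) : Kc (u + v) = Kc u + Kc v := by
  apply lp.ext; funext k
  simp only [Kc_apply, lp.coeFn_add, Pi.add_apply, map_add, mul_add]

lemma Kc_neg (u : Hsp) : Kc (-u) = -(Kc u) := by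
  apply lp.ext; funext k
  simp only [Kc_apply, lp.coeFn_neg, Pi.neg_apply, map_neg, mul_neg]

lemma Kc_invol (u : Hsp) : Kc (Kc u) = -u := by
  apply lp.ext; funext k
  simp only [Kc_apply, lp.coeFn_neg, Pi.neg_apply, negNZ_invol, map_mul,
    conj_sign, Complex.conj_conj, sign_negNZ, map_neg]
  rw [show (k.1.sign : ℂ) * (-(k.1.sign:ℂ) * (u : ∀ _ : NZ, ℂ) k)
      = -((k.1.sign:ℂ) * (k.1.sign:ℂ)) * (u : ∀ _ : NZ, ℂ) k from by ring, sign_sq]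
  ring

lemma C0KC0 (u : Hsp) : C0 (Kc (C0 u)) = -(Kc u) := by
  apply lp.ext; funext k
  simp only [C0_apply, Kc_apply, lp.coeFn_neg, Pi.neg_apply, negNZ_invol, map_mul,
    conj_sign, Complex.conj_conj, sign_negNZ, map_neg]
  ring

lemma C0_norm (u : Hsp) : ‖C0 u‖ = ‖u‖ := by
  have h2 : (0:ℝ) < (2:ℝ≥0∞).toReal := by norm_num
  rw [lp.norm_eq_tsum_rpow h2, lp.norm_eq_tsum_rpow h2]
  congr 1
  rw [← negE.tsum_eq (fun k : NZ => ‖(u : ∀ _ : NZ, ℂ) k‖ ^ (2:ℝ≥0∞).toReal)]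
  apply tsum_congr; intro k
  simp [C0_apply, negE]

lemma C0_cont : Continuous C0 := by
  have : Isometry C0 := Isometry.of_dist_eq (fun u v => by
    rw [dist_eq_norm, dist_eq_norm, ← C0_sub, C0_norm])
  exact this.continuous

lemma C0_single (n : NZ) (c : ℂ) :
    C0 (lp.single 2 n c) = lp.single 2 (negNZ n) (conj' c) := by
  apply lp.ext; funext k
  rw [C0_apply, single_apply', single_apply']
  have : negNZ k = n ↔ k = negNZ n := by
    constructor
    · intro h; rw [← h, negNZ_invol]
    · intro h; rw [h, negNZ_invol]
  split_ifs with h1 h2 h2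
  · rfl
  · exact absurd (this.mp h1) h2
  · exact absurd (this.mpr h2) h1
  · exact map_zero _

noncomputable def ev (m : NZ) : Hsp →L[ℂ] ℂ := innerSL ℂ (lp.single 2 m (1:ℂ))

lemma ev_apply (m : NZ) (f : Hsp) : ev m f = (f : ∀ _ : NZ, ℂ) m := by
  simp [ev, lp.inner_single_left, RCLike.inner_apply]

lemma single_coe (k : NZ) (c : ℂ) :
    lp.single (E := fun _ : NZ => ℂ) 2 k c = c • lp.single 2 k (1:ℂ) := by
  rw [← lp.single_smul]; norm_num

lemma coord_smul_single (T : Hsp →L[ℂ] Hsp) (k : NZ) (c : ℂ) (m : NZ) :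
    (T (lp.single 2 k c) : ∀ _ : NZ, ℂ) m = c * ent T m k := by
  rw [single_coe, map_smul, lp.coeFn_smul]
  simp [ent, smul_eq_mul]

lemma coord_hasSum (T : Hsp →L[ℂ] Hsp) (v : Hsp) (m : NZ) :
    HasSum (fun k : NZ => (v : ∀ _ : NZ, ℂ) k * ent T m k) ((T v : ∀ _ : NZ, ℂ) m) := by
  have h1 : HasSum (fun k : NZ => lp.single 2 k ((v : ∀ _ : NZ, ℂ) k)) v :=
    lp.hasSum_single (by norm_num) v
  have h2 := ((ev m).comp T).hasSum h1
  simpa only [ContinuousLinearMap.comp_apply, ev_apply, coord_smul_single] using h2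

lemma coord_tsum (T : Hsp →L[ℂ] Hsp) (v : Hsp) (m : NZ) :
    (T v : ∀ _ : NZ, ℂ) m = ∑' k : NZ, (v : ∀ _ : NZ, ℂ) k * ent T m k :=
  (coord_hasSum T v m).tsum_eq.symm

lemma ext_on_singles {f g : Hsp → Hsp} (hfa : ∀ x y, f (x + y) = f x + f y)
    (hga : ∀ x y, g (x + y) = g x + g y) (hf : Continuous f) (hg : Continuous g)
    (h : ∀ (n : NZ) (c : ℂ), f (lp.single 2 n c) = g (lp.single 2 n c)) (u : Hsp) :
    f u = g u := by
  have h1 : HasSum (fun k : NZ => lp.single 2 k ((u : ∀ _ : NZ, ℂ) k)) u :=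
    lp.hasSum_single (by norm_num) u
  have hf' := h1.map (AddMonoidHom.mk' f hfa) hf
  have hg' := h1.map (AddMonoidHom.mk' g hga) hg
  have he : (⇑(AddMonoidHom.mk' f hfa) ∘ fun k : NZ => lp.single 2 k ((u : ∀ _ : NZ, ℂ) k))
      = (⇑(AddMonoidHom.mk' g hga) ∘ fun k : NZ => lp.single 2 k ((u : ∀ _ : NZ, ℂ) k)) :=
    funext fun k => h _ _
  rw [he] at hf'
  exact hf'.unique hg'

lemma inner_eq (u v : Hsp) :
    ⟪u, v⟫ = ∑' k : NZ, conj' ((u : ∀ _ : NZ, ℂ) k) * (v : ∀ _ : NZ, ℂ) k := by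
  rw [lp.inner_eq_tsum]
  apply tsum_congr; intro k
  simp [RCLike.inner_apply]; ring

lemma omega_eq (u v : Hsp) : omegaB u v = ⟪Kc u, v⟫ := by
  rw [inner_eq, omegaB]
  have hre : ∑' k : NZ, (k.1.sign : ℂ) * (u : ∀ _ : NZ, ℂ) k * (v : ∀ _ : NZ, ℂ) (negNZ k)
      = ∑' k : NZ, -((k.1.sign : ℂ) * (u : ∀ _ : NZ, ℂ) (negNZ k) * (v : ∀ _ : NZ, ℂ) k) := by
    rw [← negE.tsum_eq (fun k : NZ =>
      (k.1.sign : ℂ) * (u : ∀ _ : NZ, ℂ) k * (v : ∀ _ : NZ, ℂ) (negNZ k))]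
    apply tsum_congr; intro k
    show ((negNZ k).1.sign : ℂ) * (u : ∀ _ : NZ, ℂ) (negNZ k)
        * (v : ∀ _ : NZ, ℂ) (negNZ (negNZ k)) = _
    rw [sign_negNZ, negNZ_invol]; ring
  rw [hre, tsum_neg, neg_neg]
  apply tsum_congr; intro k
  rw [Kc_apply, map_mul, conj_sign, Complex.conj_conj]


lemma inner_C0 (x y : Hsp) : ⟪C0 x, y⟫ = ⟪C0 y, x⟫ := by
  rw [inner_eq, inner_eq]
  calc ∑' k : NZ, conj' ((C0 x : ∀ _ : NZ, ℂ) k) * (y : ∀ _ : NZ, ℂ) k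
      = ∑' k : NZ, (fun k : NZ => conj' ((C0 y : ∀ _ : NZ, ℂ) k) * (x : ∀ _ : NZ, ℂ) k) (negE k) := by
        apply tsum_congr; intro k
        simp only [C0_apply, Complex.conj_conj, negE, Equiv.coe_fn_mk, negNZ_invol]
        ring
    _ = _ := negE.tsum_eq (fun k : NZ => conj' ((C0 y : ∀ _ : NZ, ℂ) k) * (x : ∀ _ : NZ, ℂ) k)

lemma inner_C0' (x y : Hsp) : ⟪x, C0 y⟫ = ⟪y, C0 x⟫ := by
  rw [inner_eq, inner_eq]
  calc ∑' k : NZ, conj' ((x : ∀ _ : NZ, ℂ) k) * (C0 y : ∀ _ : NZ, ℂ) k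
      = ∑' k : NZ, (fun k : NZ => conj' ((y : ∀ _ : NZ, ℂ) k) * (C0 x : ∀ _ : NZ, ℂ) k) (negE k) := by
        apply tsum_congr; intro k
        simp only [C0_apply, Complex.conj_conj, negE, Equiv.coe_fn_mk, negNZ_invol]
        ring
    _ = _ := negE.tsum_eq (fun k : NZ => conj' ((y : ∀ _ : NZ, ℂ) k) * (C0 x : ∀ _ : NZ, ℂ) k)

lemma ent_adj (B : Hsp →L[ℂ] Hsp) (m n : NZ) :
    ent (ContinuousLinearMap.adjoint B) m n = conj' (ent B n m) := by
  have h1 : ent (ContinuousLinearMap.adjoint B) m n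
      = ⟪lp.single 2 m (1:ℂ), (ContinuousLinearMap.adjoint B) (lp.single 2 n 1)⟫ := by
    rw [lp.inner_single_left]
    simp [RCLike.inner_apply, ent]
  rw [h1, ContinuousLinearMap.adjoint_inner_right, lp.inner_single_right]
  simp [RCLike.inner_apply, ent]

end SympAux

section Main
open SympAux Complex
local notation "⟪" x ", " y "⟫" => @inner ℂ _ _ x y
local notation "conj'" => starRingEnd ℂ

/-- Let `A` be a bounded operator on `𝓗` preserving the symplectic form `ω`, with `J` the
operator `(Ju)(n) = i·sgn(n)·u(n)`, `AT` the transpose of `A` (characterized by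
`(A^T)_{m,n} = A_{−n,−m}`), and `C` the conjugation `(Cu)(n) = i·conj(u(−n))`.
Then: (1) `A` is bijective iff (2) `A ∘ J ∘ A^T = J` iff (3) `A^T` preserves `ω` iff
(4) `Σ_{k≠0} sgn(mk)·A_{m,k}·A_{−n,−k} = δ_{m,n}`; and if moreover `C∘A∘C = A`, these are
also equivalent to (5) `Σ_{k≠0} sgn(mk)·A_{m,k}·conj(A_{n,k}) = δ_{m,n}`. -/
theorem invertible_tfae (A J AT : Hsp →L[ℂ] Hsp)
    (hJ : ∀ (u : Hsp) (n : NZ),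
      (J u : ∀ _ : NZ, ℂ) n = Complex.I * (n.1.sign : ℂ) * (u : ∀ _ : NZ, ℂ) n)
    (hAT : ∀ m n : NZ, ent AT m n = ent A (negNZ n) (negNZ m))
    (C : Hsp → Hsp)
    (hC : ∀ (u : Hsp) (n : NZ),
      (C u : ∀ _ : NZ, ℂ) n = Complex.I * (starRingEnd ℂ) ((u : ∀ _ : NZ, ℂ) (negNZ n)))
    (hpres : ∀ u v : Hsp, omegaB (A u) (A v) = omegaB u v) :
    (Function.Bijective A ↔ A.comp (J.comp AT) = J) ∧
    (Function.Bijective A ↔ ∀ u v : Hsp, omegaB (AT u) (AT v) = omegaB u v) ∧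
    (Function.Bijective A ↔
      ∀ m n : NZ, ∑' k : NZ, ((m.1 * k.1).sign : ℂ) * ent A m k * ent A (negNZ n) (negNZ k)
        = if m = n then 1 else 0) ∧
    ((∀ u : Hsp, C (A (C u)) = A u) →
      (Function.Bijective A ↔
        ∀ m n : NZ, ∑' k : NZ, ((m.1 * k.1).sign : ℂ) * ent A m k * (starRingEnd ℂ) (ent A n k)
          = if m = n then 1 else 0)) := by
  classical
  have JC0 : ∀ w : Hsp, J (C0 w) = Complex.I • Kc w := by
    intro w; apply lp.ext; funext k
    rw [hJ, lp.coeFn_smul]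
    simp only [Pi.smul_apply, smul_eq_mul, Kc_apply, C0_apply]
    ring
  have H : ∀ u, (ContinuousLinearMap.adjoint A) (Kc (A u)) = Kc u := by
    intro u
    apply ext_inner_right ℂ
    intro v
    rw [ContinuousLinearMap.adjoint_inner_left, ← omega_eq, ← omega_eq]
    exact hpres u v
  have hATf : ∀ u, AT u = C0 ((ContinuousLinearMap.adjoint A) (C0 u)) := by
    intro u
    refine ext_on_singles (f := ⇑AT)
      (g := fun w => C0 ((ContinuousLinearMap.adjoint A) (C0 w)))
      (fun x y => map_add AT x y)
      (fun x y => by rw [C0_add, map_add, C0_add])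
      AT.continuous
      (C0_cont.comp ((ContinuousLinearMap.adjoint A).continuous.comp C0_cont)) ?_ u
    intro n c
    show AT (lp.single 2 n c) = C0 ((ContinuousLinearMap.adjoint A) (C0 (lp.single 2 n c)))
    have base1 : AT (lp.single 2 n 1) = C0 ((ContinuousLinearMap.adjoint A) (C0 (lp.single 2 n 1))) := by
      rw [C0_single, map_one]
      apply lp.ext; funext m
      rw [C0_apply]
      have h1 : (((ContinuousLinearMap.adjoint A) (lp.single 2 (negNZ n) 1)) : ∀ _ : NZ, ℂ) (negNZ m)
          = ent (ContinuousLinearMap.adjoint A) (negNZ m) (negNZ n) := rfl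
      rw [h1, ent_adj, Complex.conj_conj]
      exact hAT m n
    rw [show lp.single (E := fun _ : NZ => ℂ) 2 n c = c • lp.single 2 n (1:ℂ) from single_coe n c,
      map_smul, C0_smul, map_smul, C0_smul, Complex.conj_conj, base1]
  have hATadj : ∀ u, (ContinuousLinearMap.adjoint AT) u = C0 (A (C0 u)) := by
    intro u
    apply ext_inner_right ℂ
    intro v
    rw [ContinuousLinearMap.adjoint_inner_left, hATf v, inner_C0' u,
      ContinuousLinearMap.adjoint_inner_left, inner_C0]
  have E1 : Function.Bijective ⇑A ↔ (∀ u, A (Kc ((ContinuousLinearMap.adjoint A) u)) = Kc u) := by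
    constructor
    · intro hbij u
      obtain ⟨B, hB1, hB2⟩ := Function.bijective_iff_has_inverse.mp hbij
      have hu : u = Kc (-(Kc u)) := by rw [Kc_neg, Kc_invol, neg_neg]
      have h1 : (ContinuousLinearMap.adjoint A) u = Kc (B (-(Kc u))) := by
        calc (ContinuousLinearMap.adjoint A) u
            = (ContinuousLinearMap.adjoint A) (Kc (A (B (-(Kc u))))) := by
              rw [hB2 (-(Kc u))]; exact congrArg _ hu
          _ = Kc (B (-(Kc u))) := H _
      rw [h1, Kc_invol, map_neg, hB2, neg_neg]
    · intro h3
      apply Function.bijective_iff_has_inverse.mpr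
      refine ⟨fun v => -(Kc ((ContinuousLinearMap.adjoint A) (Kc v))), fun x => ?_, fun v => ?_⟩
      · show -(Kc ((ContinuousLinearMap.adjoint A) (Kc (A x)))) = x
        rw [H x, Kc_invol, neg_neg]
      · show A (-(Kc ((ContinuousLinearMap.adjoint A) (Kc v)))) = v
        rw [map_neg, h3 (Kc v), Kc_invol, neg_neg]
  have E2 : (A.comp (J.comp AT) = J) ↔ (∀ u, A (Kc ((ContinuousLinearMap.adjoint A) u)) = Kc u) := by
    rw [ContinuousLinearMap.ext_iff]
    constructor
    · intro h u
      have h2 := h (C0 u)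
      simp only [ContinuousLinearMap.comp_apply] at h2
      rw [hATf (C0 u), C0_invol, JC0, map_smul, JC0] at h2
      exact smul_right_injective Hsp Complex.I_ne_zero h2
    · intro h u
      simp only [ContinuousLinearMap.comp_apply]
      rw [hATf u, JC0, map_smul, h (C0 u), ← JC0 (C0 u), C0_invol]
  have hKCo : ∀ y : Hsp, Kc (C0 y) = -(C0 (Kc y)) := by
    intro y
    have h := congrArg C0 (C0KC0 y)
    rw [C0_invol, C0_neg] at h
    exact h
  have step : ∀ u, (ContinuousLinearMap.adjoint AT) (Kc (AT u))
      = -(C0 (A (Kc ((ContinuousLinearMap.adjoint A) (C0 u))))) := by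
    intro u
    rw [hATf u, hATadj, C0KC0, map_neg, C0_neg]
  have E3 : (∀ u v : Hsp, omegaB (AT u) (AT v) = omegaB u v)
      ↔ (∀ u, A (Kc ((ContinuousLinearMap.adjoint A) u)) = Kc u) := by
    constructor
    · intro h3 y
      have hstar : ∀ x, (ContinuousLinearMap.adjoint AT) (Kc (AT x)) = Kc x := by
        intro x
        apply ext_inner_right ℂ
        intro v
        rw [ContinuousLinearMap.adjoint_inner_left, ← omega_eq, ← omega_eq]
        exact h3 x v
      have h4 := (step (C0 y)).symm.trans (hstar (C0 y))
      rw [C0_invol, hKCo y] at h4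
      have h5 := neg_injective h4
      have h6 := congrArg C0 h5
      rw [C0_invol, C0_invol] at h6
      exact h6
    · intro h3' u v
      rw [omega_eq, omega_eq, ← ContinuousLinearMap.adjoint_inner_left, step u,
        h3' (C0 u), C0KC0, neg_neg]
  have hmulne : ∀ m : NZ, (Complex.I * (m.1.sign : ℂ)) ≠ 0 :=
    fun m => mul_ne_zero Complex.I_ne_zero (sign_ne_zero m)
  have coordL : ∀ m n : NZ, ((A.comp (J.comp AT)) (lp.single 2 n 1) : ∀ _ : NZ, ℂ) m
      = (Complex.I * (m.1.sign : ℂ)) *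
        ∑' k : NZ, ((m.1 * k.1).sign : ℂ) * ent A m k * ent A (negNZ n) (negNZ k) := by
    intro m n
    simp only [ContinuousLinearMap.comp_apply]
    rw [coord_tsum A (J (AT (lp.single 2 n 1))) m, ← tsum_mul_left]
    apply tsum_congr; intro k
    rw [hJ]
    have h1 : ((AT (lp.single 2 n 1)) : ∀ _ : NZ, ℂ) k = ent A (negNZ n) (negNZ k) := hAT k n
    rw [h1]
    have h2 : ((m.1 * k.1).sign : ℂ) = (m.1.sign : ℂ) * (k.1.sign : ℂ) := by
      rw [Int.sign_mul]; push_cast; ring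
    rw [h2]
    linear_combination (-(Complex.I * (k.1.sign : ℂ) * ent A m k * ent A (negNZ n) (negNZ k))) * (sign_sq m)
  have coordR : ∀ m n : NZ, ((J (lp.single 2 n 1)) : ∀ _ : NZ, ℂ) m
      = (Complex.I * (m.1.sign : ℂ)) * (if m = n then 1 else 0) := by
    intro m n
    rw [hJ, single_apply']
  have E4 : (A.comp (J.comp AT) = J) ↔
      (∀ m n : NZ, ∑' k : NZ, ((m.1 * k.1).sign : ℂ) * ent A m k * ent A (negNZ n) (negNZ k)
        = if m = n then 1 else 0) := by
    constructor
    · intro h m n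
      have h0 : ((A.comp (J.comp AT)) (lp.single 2 n 1) : ∀ _ : NZ, ℂ) m
          = ((J (lp.single 2 n 1)) : ∀ _ : NZ, ℂ) m := by rw [h]
      rw [coordL, coordR] at h0
      exact mul_left_cancel₀ (hmulne m) h0
    · intro h
      apply ContinuousLinearMap.ext
      intro u
      refine ext_on_singles (fun x y => map_add _ x y) (fun x y => map_add J x y)
        (A.comp (J.comp AT)).continuous J.continuous ?_ u
      intro n c
      rw [show lp.single (E := fun _ : NZ => ℂ) 2 n c = c • lp.single 2 n (1:ℂ) from single_coe n c,
        map_smul, map_smul]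
      congr 1
      apply lp.ext; funext m
      rw [coordL, coordR, h m n]
  refine ⟨E1.trans E2.symm, E1.trans E3.symm, (E1.trans E2.symm).trans E4, ?_⟩
  intro hCA
  have hCe : ∀ n : NZ, C (lp.single 2 n 1) = Complex.I • lp.single 2 (negNZ n) 1 := by
    intro n
    apply lp.ext; funext j
    rw [hC, lp.coeFn_smul]
    simp only [Pi.smul_apply, smul_eq_mul]
    rw [single_apply', single_apply']
    have hiff : negNZ j = n ↔ j = negNZ n :=
      ⟨fun h => by rw [← h, negNZ_invol], fun h => by rw [h, negNZ_invol]⟩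
    by_cases h1 : j = negNZ n
    · rw [if_pos h1, if_pos (hiff.mpr h1), map_one]
    · rw [if_neg h1, if_neg (fun hcon => h1 (hiff.mp hcon)), map_zero]
  have base : ∀ m n : NZ, conj' (ent A (negNZ m) (negNZ n)) = ent A m n := by
    intro m n
    have h0 : (C (A (C (lp.single 2 n 1))) : ∀ _ : NZ, ℂ) m
        = (A (lp.single 2 n 1) : ∀ _ : NZ, ℂ) m := by rw [hCA]
    rw [hCe n, map_smul, hC, lp.coeFn_smul] at h0
    simp only [Pi.smul_apply, smul_eq_mul, map_mul, Complex.conj_I] at h0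
    have hz : ∀ z : ℂ, Complex.I * (-Complex.I * z) = z := fun z => by
      rw [← mul_assoc, mul_neg, Complex.I_mul_I]; ring
    rw [hz] at h0
    exact h0
  have key : ∀ n k : NZ, ent A (negNZ n) (negNZ k) = conj' (ent A n k) := by
    intro n k
    rw [← base n k, Complex.conj_conj]
  have hsum : (∀ m n : NZ, ∑' k : NZ,
        ((m.1 * k.1).sign : ℂ) * ent A m k * ent A (negNZ n) (negNZ k) = if m = n then 1 else 0)
      ↔ (∀ m n : NZ, ∑' k : NZ,
        ((m.1 * k.1).sign : ℂ) * ent A m k * conj' (ent A n k) = if m = n then 1 else 0) := by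
    apply forall_congr'; intro m; apply forall_congr'; intro n
    have ht : ∑' k : NZ, ((m.1 * k.1).sign : ℂ) * ent A m k * ent A (negNZ n) (negNZ k)
        = ∑' k : NZ, ((m.1 * k.1).sign : ℂ) * ent A m k * conj' (ent A n k) :=
      tsum_congr (fun k => by rw [key n k])
    rw [ht]
  exact ((E1.trans E2.symm).trans E4).trans hsum

end Main
end

section
/- The set Sp(∞) of bounded linear operators A on 𝓗 such that (i) A is bijective, (ii) C∘A∘C = A, (iii) A preserves the form ω, and (iv) ‖A‖₂² := Σ_{m>0, n<0} |A_{m,n}|² < ∞, is a group under composition: the identity belongs to Sp(∞), and if A, B ∈ Sp(∞) then A∘B ∈ Sp(∞) and A⁻¹ ∈ Sp(∞). In particular, the upper-right block of A⁻¹ is again Hilbert–Schmidt. -/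
open scoped ComplexConjugate ENNReal
local notation "⟪" x ", " y "⟫" => @inner ℂ _ _ x y

lemma negNZ_negNZ (n : NZ) : negNZ (negNZ n) = n := by
  simp [negNZ]

lemma negNZ_inj {m n : NZ} (h : negNZ m = negNZ n) : m = n := by
  have := congrArg negNZ h
  rwa [negNZ_negNZ, negNZ_negNZ] at this

lemma single_coe (n m : NZ) :
    (lp.single 2 n (1:ℂ) : ∀ _ : NZ, ℂ) m = if m = n then 1 else 0 := by
  rw [lp.single_apply]
  split_ifs with h
  · subst h; simp
  · simp [Pi.single_apply, h]

lemma norm_sq_eq (u : Hsp) : ‖u‖ ^ 2 = ∑' k, ‖(u : ∀ _ : NZ, ℂ) k‖ ^ 2 := by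
  have h := lp.norm_rpow_eq_tsum (p := 2) (by norm_num) u
  simpa [Real.rpow_two] using h

lemma summable_norm_sq (u : Hsp) : Summable fun k => ‖(u : ∀ _ : NZ, ℂ) k‖ ^ 2 := by
  have h := lp.memℓp u
  rw [memℓp_gen_iff (by norm_num : 0 < (2:ℝ≥0∞).toReal)] at h
  simpa [Real.rpow_two] using h

lemma coord_eq_inner (u : Hsp) (n : NZ) :
    (u : ∀ _ : NZ, ℂ) n = ⟪lp.single 2 n (1:ℂ), u⟫ := by
  rw [lp.inner_single_left]
  simp [RCLike.inner_apply]

lemma sign_val {n : NZ} : (n.1.sign : ℂ) = 1 ∨ (n.1.sign : ℂ) = -1 := by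
  rcases lt_or_gt_of_ne n.2 with h | h
  · right; rw [Int.sign_eq_neg_one_iff_neg.mpr h]; norm_num
  · left; rw [Int.sign_eq_one_iff_pos.mpr h]; norm_num

lemma norm_sign (n : NZ) : ‖(n.1.sign : ℂ)‖ = 1 := by
  rcases sign_val (n := n) with h | h <;> rw [h] <;> simp

lemma sign_neg' (n : NZ) : (((negNZ n).1.sign : ℤ) : ℂ) = -(n.1.sign : ℂ) := by
  simp [negNZ, Int.sign_neg]

lemma omegaB_single_right (u : Hsp) (n : NZ) :
    omegaB u (lp.single 2 n (1:ℂ)) = (n.1.sign : ℂ) * (u : ∀ _ : NZ, ℂ) (negNZ n) := by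
  unfold omegaB
  rw [tsum_eq_single (negNZ n) ?_]
  · rw [single_coe, if_pos (negNZ_negNZ n), sign_neg']
    ring
  · intro k hk
    rw [single_coe, if_neg, mul_zero]
    intro h; exact hk (by rw [← h, negNZ_negNZ])

lemma omegaB_single_left (j : NZ) (v : Hsp) :
    omegaB (lp.single 2 j (1:ℂ)) v = -((j.1.sign : ℂ) * (v : ∀ _ : NZ, ℂ) (negNZ j)) := by
  unfold omegaB
  rw [tsum_eq_single j ?_]
  · rw [single_coe, if_pos rfl]; ring
  · intro k hk
    rw [single_coe, if_neg hk]; ring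

lemma CC_id (C : Hsp → Hsp)
    (hC : ∀ (u : Hsp) (n : NZ),
      (C u : ∀ _ : NZ, ℂ) n = Complex.I * (starRingEnd ℂ) ((u : ∀ _ : NZ, ℂ) (negNZ n)))
    (u : Hsp) : C (C u) = u := by
  apply lp.ext; funext n
  rw [hC, hC, negNZ_negNZ]
  simp [map_mul, Complex.conj_I]
  ring_nf
  simp [Complex.I_sq]

/-- mask to coordinates satisfying a decidable predicate -/
noncomputable def mask (P : NZ → Prop) [DecidablePred P] (u : Hsp) : Hsp :=
  ⟨fun k => if P k then (u : ∀ _ : NZ, ℂ) k else 0, by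
    apply memℓp_gen
    refine Summable.of_nonneg_of_le (fun k => by positivity) (fun k => ?_)
      ((memℓp_gen_iff (by norm_num : 0 < (2:ℝ≥0∞).toReal)).mp (lp.memℓp u))
    split_ifs with h
    · exact le_rfl
    · simp only [norm_zero]
      rw [Real.zero_rpow (by norm_num)]
      positivity⟩

lemma mask_coe (P : NZ → Prop) [DecidablePred P] (u : Hsp) (k : NZ) :
    (mask P u : ∀ _ : NZ, ℂ) k = if P k then (u : ∀ _ : NZ, ℂ) k else 0 := rfl

lemma mask_add (P : NZ → Prop) [DecidablePred P] (u : Hsp) :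
    mask P u + mask (fun k => ¬ P k) u = u := by
  apply lp.ext; funext k
  rw [lp.coeFn_add]
  simp only [Pi.add_apply, mask_coe]
  split_ifs <;> simp

lemma inner_mask (P : NZ → Prop) [DecidablePred P] (x y : Hsp) :
    ⟪mask P x, y⟫ = ⟪x, mask P y⟫ := by
  rw [lp.inner_eq_tsum, lp.inner_eq_tsum]
  apply tsum_congr; intro k
  simp only [mask_coe, RCLike.inner_apply]
  split_ifs <;> simp

lemma norm_sq_mask (P : NZ → Prop) [DecidablePred P] (u : Hsp) :
    ‖mask P u‖ ^ 2 = ∑' k, (if P k then ‖(u : ∀ _ : NZ, ℂ) k‖ ^ 2 else 0) := by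
  rw [norm_sq_eq]
  apply tsum_congr; intro k
  rw [mask_coe]; split_ifs <;> simp

lemma adjoint_coord (A : Hsp →L[ℂ] Hsp) (m n : NZ) :
    ((ContinuousLinearMap.adjoint A) (lp.single 2 m (1:ℂ)) : ∀ _ : NZ, ℂ) n
      = conj (ent A m n) := by
  rw [coord_eq_inner, ContinuousLinearMap.adjoint_inner_right, lp.inner_single_right]
  rw [ent, coord_eq_inner, lp.inner_single_left]
  simp [RCLike.inner_apply]

lemma coord_comp (A B : Hsp →L[ℂ] Hsp) (m n : NZ) :
    ((A (mask (fun k => k.1 < 0) (B (lp.single 2 n (1:ℂ))))) : ∀ _ : NZ, ℂ) m =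
      conj (((ContinuousLinearMap.adjoint B)
        (mask (fun k => k.1 < 0) ((ContinuousLinearMap.adjoint A) (lp.single 2 m (1:ℂ))))
          : ∀ _ : NZ, ℂ) n) := by
  rw [coord_eq_inner, ← ContinuousLinearMap.adjoint_inner_left, ← inner_mask,
    ← ContinuousLinearMap.adjoint_inner_left, coord_eq_inner,
    ← inner_conj_symm]

lemma mask_pos_add_neg (u : Hsp) :
    mask (fun k => 0 < k.1) u + mask (fun k => k.1 < 0) u = u := by
  apply lp.ext; funext k
  rw [lp.coeFn_add]
  simp only [Pi.add_apply, mask_coe]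
  rcases lt_or_gt_of_ne k.2 with h | h
  · rw [if_neg (by omega), if_pos h, zero_add]
  · rw [if_pos h, if_neg (by omega), add_zero]

lemma norm_op_sq (T : Hsp →L[ℂ] Hsp) (u : Hsp) : ‖T u‖ ^ 2 ≤ ‖T‖ ^ 2 * ‖u‖ ^ 2 := by
  have h1 := T.le_opNorm u
  have h2 := norm_nonneg (T u)
  have h3 := norm_nonneg u
  have h4 := T.opNorm_nonneg
  nlinarith

lemma sq_add_le (x y : ℂ) : ‖x + y‖ ^ 2 ≤ 2 * ‖x‖ ^ 2 + 2 * ‖y‖ ^ 2 := by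
  have h := norm_add_le x y
  have h2 : ‖x + y‖ ^ 2 ≤ (‖x‖ + ‖y‖) ^ 2 := pow_le_pow_left₀ (norm_nonneg _) h 2
  nlinarith [sq_nonneg (‖x‖ - ‖y‖)]

lemma hs_comp (A B : Hsp →L[ℂ] Hsp)
    (hA : Summable (fun p : NZ × NZ =>
      if 0 < p.1.1 ∧ p.2.1 < 0 then ‖ent A p.1 p.2‖ ^ 2 else (0:ℝ)))
    (hB : Summable (fun p : NZ × NZ =>
      if 0 < p.1.1 ∧ p.2.1 < 0 then ‖ent B p.1 p.2‖ ^ 2 else (0:ℝ))) :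
    Summable (fun p : NZ × NZ =>
      if 0 < p.1.1 ∧ p.2.1 < 0 then ‖ent (A.comp B) p.1 p.2‖ ^ 2 else (0:ℝ)) := by
  classical
  set e : NZ → Hsp := fun n => lp.single 2 n (1:ℂ) with he
  set A' := ContinuousLinearMap.adjoint A with hA'
  set B' := ContinuousLinearMap.adjoint B with hB'
  set fA : NZ × NZ → ℝ := fun p =>
    if 0 < p.1.1 ∧ p.2.1 < 0 then ‖ent A p.1 p.2‖ ^ 2 else (0:ℝ) with hfA
  set fB : NZ × NZ → ℝ := fun p =>
    if 0 < p.1.1 ∧ p.2.1 < 0 then ‖ent B p.1 p.2‖ ^ 2 else (0:ℝ) with hfB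
  set F1 : NZ × NZ → ℝ := fun q =>
    if q.1.1 < 0 then ‖(A (mask (fun k => 0 < k.1) (B (e q.1))) : ∀ _ : NZ, ℂ) q.2‖ ^ 2 else 0
    with hF1
  set F2 : NZ × NZ → ℝ := fun p =>
    if 0 < p.1.1 then ‖(B' (mask (fun k => k.1 < 0) (A' (e p.1))) : ∀ _ : NZ, ℂ) p.2‖ ^ 2 else 0
    with hF2
  have hF1nn : ∀ q, 0 ≤ F1 q := by intro q; rw [hF1]; dsimp only; split_ifs <;> positivity
  have hF2nn : ∀ q, 0 ≤ F2 q := by intro q; rw [hF2]; dsimp only; split_ifs <;> positivity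
  have hfBnn : ∀ q, 0 ≤ fB q := by intro q; rw [hfB]; dsimp only; split_ifs <;> positivity
  have hfAnn : ∀ q, 0 ≤ fA q := by intro q; rw [hfA]; dsimp only; split_ifs <;> positivity
  -- marginal of fB in the second variable
  have hBswap : Summable (fun q : NZ × NZ => fB (q.2, q.1)) :=
    hB.comp_injective (Equiv.prodComm NZ NZ).injective
  have hBmarg : Summable (fun n : NZ => ∑' k : NZ, fB (k, n)) :=
    ((summable_prod_of_nonneg (fun q => hfBnn _)).mp hBswap).2
  have hAmarg : Summable (fun m : NZ => ∑' k : NZ, fA (m, k)) :=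
    ((summable_prod_of_nonneg (fun q => hfAnn _)).mp hA).2
  -- Summability of F1
  have S1 : Summable F1 := by
    rw [summable_prod_of_nonneg (fun q => hF1nn q)]
    constructor
    · intro n
      by_cases h : n.1 < 0
      · simp only [hF1, if_pos h]
        exact summable_norm_sq _
      · simp only [hF1, if_neg h]
        exact summable_zero
    · refine Summable.of_nonneg_of_le (fun n => tsum_nonneg fun m => hF1nn _)
        (fun n => ?_) (hBmarg.mul_left (‖A‖ ^ 2))
      by_cases h : n.1 < 0
      · simp only [hF1, if_pos h]
        rw [← norm_sq_eq]
        refine le_trans (norm_op_sq A _) ?_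
        refine mul_le_mul_of_nonneg_left ?_ (by positivity)
        rw [norm_sq_mask]
        refine le_of_eq (tsum_congr fun k => ?_)
        rw [hfB]
        dsimp only
        by_cases hk : 0 < k.1
        · rw [if_pos hk, if_pos ⟨hk, h⟩]; rfl
        · rw [if_neg hk, if_neg (by tauto)]
      · simp only [hF1, if_neg h, tsum_zero]
        have : 0 ≤ ∑' k : NZ, fB (k, n) := tsum_nonneg fun k => hfBnn _
        positivity
  -- Summability of F2
  have S2 : Summable F2 := by
    rw [summable_prod_of_nonneg (fun q => hF2nn q)]
    constructor
    · intro m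
      by_cases h : 0 < m.1
      · simp only [hF2, if_pos h]
        exact summable_norm_sq _
      · simp only [hF2, if_neg h]
        exact summable_zero
    · refine Summable.of_nonneg_of_le (fun m => tsum_nonneg fun n => hF2nn _)
        (fun m => ?_) (hAmarg.mul_left (‖B'‖ ^ 2))
      by_cases h : 0 < m.1
      · simp only [hF2, if_pos h]
        rw [← norm_sq_eq]
        refine le_trans (norm_op_sq B' _) ?_
        refine mul_le_mul_of_nonneg_left ?_ (by positivity)
        rw [norm_sq_mask]
        refine le_of_eq (tsum_congr fun k => ?_)
        rw [hfA]
        dsimp only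
        by_cases hk : k.1 < 0
        · rw [if_pos hk, if_pos ⟨h, hk⟩, adjoint_coord]
          rw [RCLike.norm_conj]
        · rw [if_neg hk, if_neg (by tauto)]
      · simp only [hF2, if_neg h, tsum_zero]
        have : 0 ≤ ∑' k : NZ, fA (m, k) := tsum_nonneg fun k => hfAnn _
        positivity
  -- combine
  have S1swap : Summable (fun p : NZ × NZ => F1 (p.2, p.1)) :=
    S1.comp_injective (Equiv.prodComm NZ NZ).injective
  refine Summable.of_nonneg_of_le (fun p => by positivity) (fun p => ?_)
    ((S1swap.mul_left 2).add (S2.mul_left 2))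
  by_cases h : 0 < p.1.1 ∧ p.2.1 < 0
  · obtain ⟨m, n⟩ := p
    obtain ⟨h1, h2⟩ := h
    simp only [if_pos (⟨h1, h2⟩ : 0 < m.1 ∧ n.1 < 0)]
    have hsplit : ent (A.comp B) m n =
        (A (mask (fun k => 0 < k.1) (B (e n))) : ∀ _ : NZ, ℂ) m +
        (A (mask (fun k => k.1 < 0) (B (e n))) : ∀ _ : NZ, ℂ) m := by
      have hadd : A (mask (fun k => 0 < k.1) (B (e n))) + A (mask (fun k => k.1 < 0) (B (e n)))
          = A (B (e n)) := by rw [← map_add, mask_pos_add_neg]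
      calc ent (A.comp B) m n = (A (B (e n)) : ∀ _ : NZ, ℂ) m := rfl
        _ = _ := by rw [← hadd, lp.coeFn_add, Pi.add_apply]
    have e1 : F1 (n, m) = ‖(A (mask (fun k => 0 < k.1) (B (e n))) : ∀ _ : NZ, ℂ) m‖ ^ 2 := by
      rw [hF1]; dsimp only; rw [if_pos h2]
    have e2 : F2 (m, n) = ‖(A (mask (fun k => k.1 < 0) (B (e n))) : ∀ _ : NZ, ℂ) m‖ ^ 2 := by
      rw [hF2]; dsimp only; rw [if_pos h1, hB', hA', he]
      rw [coord_comp A B m n, RCLike.norm_conj]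
    rw [hsplit, e1, e2]
    exact sq_add_le _ _
  · rw [if_neg h]
    have := hF1nn (p.2, p.1)
    have := hF2nn p
    positivity

lemma inv_entry (A B : Hsp →L[ℂ] Hsp)
    (hw : ∀ u v : Hsp, omegaB (A u) (A v) = omegaB u v)
    (hAB : ∀ u : Hsp, A (B u) = u) (j n : NZ) :
    -((j.1.sign : ℂ)) * ent B (negNZ j) n = (n.1.sign : ℂ) * ent A (negNZ n) j := by
  have h := hw (lp.single 2 j (1:ℂ)) (B (lp.single 2 n (1:ℂ)))
  rw [hAB] at h
  rw [omegaB_single_right (A (lp.single 2 j (1:ℂ))) n,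
    omegaB_single_left j (B (lp.single 2 n (1:ℂ)))] at h
  simp only [ent]
  rw [h]
  ring

lemma hs_inv (A B : Hsp →L[ℂ] Hsp)
    (hw : ∀ u v : Hsp, omegaB (A u) (A v) = omegaB u v)
    (hAB : ∀ u : Hsp, A (B u) = u)
    (hA : Summable (fun p : NZ × NZ =>
      if 0 < p.1.1 ∧ p.2.1 < 0 then ‖ent A p.1 p.2‖ ^ 2 else (0:ℝ))) :
    Summable (fun p : NZ × NZ =>
      if 0 < p.1.1 ∧ p.2.1 < 0 then ‖ent B p.1 p.2‖ ^ 2 else (0:ℝ)) := by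
  set eqv : NZ × NZ ≃ NZ × NZ :=
    ⟨fun p => (negNZ p.2, negNZ p.1), fun p => (negNZ p.2, negNZ p.1),
      fun p => by simp [negNZ_negNZ], fun p => by simp [negNZ_negNZ]⟩ with heqv
  have key : (fun p : NZ × NZ =>
      if 0 < p.1.1 ∧ p.2.1 < 0 then ‖ent B p.1 p.2‖ ^ 2 else (0:ℝ)) =
      (fun p : NZ × NZ =>
      if 0 < p.1.1 ∧ p.2.1 < 0 then ‖ent A p.1 p.2‖ ^ 2 else (0:ℝ)) ∘ eqv := by
    funext p
    obtain ⟨m, n⟩ := p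
    simp only [Function.comp_apply, heqv, Equiv.coe_fn_mk]
    have hcond : (0 < m.1 ∧ n.1 < 0) ↔ (0 < (negNZ n).1 ∧ (negNZ m).1 < 0) := by
      simp only [negNZ]; omega
    by_cases h : 0 < m.1 ∧ n.1 < 0
    · rw [if_pos h, if_pos (hcond.mp h)]
      have hent := inv_entry A B hw hAB (negNZ m) n
      rw [negNZ_negNZ, sign_neg'] at hent
      have h1 : ‖ent B m n‖ = ‖ent A (negNZ n) (negNZ m)‖ := by
        have h2 : ((m.1.sign : ℂ)) * ent B m n = (n.1.sign : ℂ) * ent A (negNZ n) (negNZ m) := by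
          rw [← hent]; ring
        have := congrArg norm h2
        rwa [norm_mul, norm_mul, norm_sign, norm_sign, one_mul, one_mul] at this
      rw [h1]
    · rw [if_neg h, if_neg (fun hc => h (hcond.mpr hc))]
  rw [key]
  exact hA.comp_injective eqv.injective

/-- Membership in `Sp(∞)` (relative to the conjugation `C`): `A` is bijective, commutes with
the conjugation (`C∘A∘C = A`), preserves the symplectic form `ω`, and its upper-right block
is Hilbert–Schmidt, i.e. `‖A‖₂² = Σ_{m>0, n<0} |A_{m,n}|² < ∞`. -/
def InSp (C : Hsp → Hsp) (A : Hsp →L[ℂ] Hsp) : Prop :=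
  Function.Bijective A ∧ (∀ u : Hsp, C (A (C u)) = A u) ∧
    (∀ u v : Hsp, omegaB (A u) (A v) = omegaB u v) ∧
    Summable (fun p : NZ × NZ =>
      if 0 < p.1.1 ∧ p.2.1 < 0 then ‖ent A p.1 p.2‖ ^ 2 else (0:ℝ))

/-- `Sp(∞)` is a group under composition: the identity lies in `Sp(∞)`, `Sp(∞)` is closed
under composition, and any (continuous) two-sided inverse of an element of `Sp(∞)` again
lies in `Sp(∞)`; in particular the upper-right block of the inverse is Hilbert–Schmidt. -/
theorem sp_infty_group (C : Hsp → Hsp)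
    (hC : ∀ (u : Hsp) (n : NZ),
      (C u : ∀ _ : NZ, ℂ) n = Complex.I * (starRingEnd ℂ) ((u : ∀ _ : NZ, ℂ) (negNZ n))) :
    InSp C (ContinuousLinearMap.id ℂ Hsp) ∧
    (∀ A B : Hsp →L[ℂ] Hsp, InSp C A → InSp C B → InSp C (A.comp B)) ∧
    (∀ A B : Hsp →L[ℂ] Hsp, InSp C A →
      (∀ u : Hsp, B (A u) = u) → (∀ u : Hsp, A (B u) = u) → InSp C B) := by
  have hCC := CC_id C hC
  refine ⟨⟨?_, ?_, ?_, ?_⟩, ?_, ?_⟩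
  · exact ⟨fun a b h => h, fun b => ⟨b, rfl⟩⟩
  · exact fun u => hCC u
  · exact fun u v => rfl
  · have hz : Summable (fun _ : NZ × NZ => (0:ℝ)) := summable_zero
    refine (summable_congr (fun p => ?_)).mpr hz
    obtain ⟨m, n⟩ := p
    by_cases h : 0 < m.1 ∧ n.1 < 0
    · rw [if_pos h]
      have : ent (ContinuousLinearMap.id ℂ Hsp) m n = 0 := by
        rw [ent, ContinuousLinearMap.id_apply, single_coe, if_neg]
        intro hmn; rw [hmn] at h; omega
      rw [this]; simp
    · rw [if_neg h]
  · rintro A B ⟨hA1, hA2, hA3, hA4⟩ ⟨hB1, hB2, hB3, hB4⟩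
    refine ⟨?_, ?_, ?_, hs_comp A B hA4 hB4⟩
    · exact hA1.comp hB1
    · intro u
      show C (A (B (C u))) = A (B u)
      rw [← hCC (B (C u)), hA2, hB2]
    · intro u v
      show omegaB (A (B u)) (A (B v)) = omegaB u v
      rw [hA3, hB3]
  · rintro A B ⟨hA1, hA2, hA3, hA4⟩ hBA hAB
    have hcomm : ∀ x : Hsp, C (A x) = A (C x) := by
      intro x
      have := hA2 (C x)
      rwa [hCC] at this
    refine ⟨?_, ?_, ?_, hs_inv A B hA3 hAB hA4⟩
    · exact ⟨fun a b h => by rw [← hAB a, h, hAB], fun b => ⟨A b, hBA b⟩⟩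
    · intro u
      have h1 : A (C (B (C u))) = u := by rw [← hcomm, hAB, hCC]
      calc C (B (C u)) = B (A (C (B (C u)))) := (hBA _).symm
        _ = B u := by rw [h1]
    · intro u v
      rw [← hA3 (B u) (B v), hAB, hAB]
end

section
/- There do not exist a lift φ of an orientation-preserving C^∞ diffeomorphism of S¹ (φ : ℝ → ℝ C^∞, φ' > 0, φ(θ+2π) = φ(θ)+2π) and a constant c ∈ ℂ such that e^{iφ(θ)} = √2·e^{iθ} − e^{−iθ} + c for all θ ∈ ℝ. (Consequently the operator A ∈ Sp(∞) with A ẽ₁ = √2 ẽ₁ − i ẽ₋₁, A ẽ₋₁ = i ẽ₁ + √2 ẽ₋₁ and A ẽ_n = ẽ_n for |n| ≥ 2 is not of the form Φ(ψ) for any diffeomorphism ψ, so Φ : Diff(S¹) → Sp(∞) is not surjective.) -/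
set_option maxHeartbeats 1000000


/-- The symplectic representation `Φ : Diff(S¹) → Sp(∞)` is not surjective: there is no
orientation-preserving `C^∞` diffeomorphism of `S¹` (given by a lift `φ`) and constant
`c ∈ ℂ` with `e^{iφ(θ)} = √2·e^{iθ} − e^{−iθ} + c` for all `θ`. (The image of
`θ ↦ √2·e^{iθ} − e^{−iθ}` is an ellipse, not a unit circle, so the explicit element
`A ∈ Sp(∞)` with `A ẽ₁ = √2 ẽ₁ − i ẽ₋₁` is not `Φ(ψ)` for any diffeomorphism `ψ`.) -/
theorem not_surjective :
    ¬ ∃ (φ : ℝ → ℝ) (c : ℂ), ContDiff ℝ (⊤ : ℕ∞) φ ∧ (∀ θ, 0 < deriv φ θ) ∧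
      (∀ θ, φ (θ + 2 * Real.pi) = φ θ + 2 * Real.pi) ∧
      ∀ θ : ℝ, Complex.exp (Complex.I * (φ θ : ℝ)) =
        (Real.sqrt 2 : ℝ) * Complex.exp (Complex.I * (θ : ℝ))
          - Complex.exp (-(Complex.I) * (θ : ℝ)) + c := by
  rintro ⟨φ, c, -, -, -, heq⟩
  have e1 : ∀ θ : ℝ, Complex.exp (Complex.I * (θ : ℝ)) =
      (Real.cos θ : ℝ) + (Real.sin θ : ℝ) * Complex.I := by
    intro θ
    rw [mul_comm, Complex.exp_mul_I, Complex.ofReal_cos, Complex.ofReal_sin]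
  have e2 : ∀ θ : ℝ, Complex.exp (-Complex.I * (θ : ℝ)) =
      (Real.cos θ : ℝ) - (Real.sin θ : ℝ) * Complex.I := by
    intro θ
    have : -Complex.I * (θ : ℝ) = Complex.I * ((-θ : ℝ) : ℂ) := by push_cast; ring
    rw [this, e1 (-θ), Real.cos_neg, Real.sin_neg]
    push_cast; ring
  have key : ∀ θ : ℝ, ‖((Real.sqrt 2 : ℝ) * Complex.exp (Complex.I * (θ : ℝ))
      - Complex.exp (-Complex.I * (θ : ℝ)) + c)‖ = 1 := by
    intro θ
    rw [← heq θ, Complex.norm_exp]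
    simp
  have nsq : ∀ θ : ℝ, Complex.normSq ((Real.sqrt 2 : ℝ) * Complex.exp (Complex.I * (θ : ℝ))
      - Complex.exp (-Complex.I * (θ : ℝ)) + c) = 1 := by
    intro θ
    rw [← Complex.sq_norm, key θ]; norm_num
  have h0 := nsq 0
  have h1 := nsq Real.pi
  have h2 := nsq (Real.pi / 2)
  have h3 := nsq (-(Real.pi / 2))
  rw [e1, e2] at h0 h1 h2 h3
  simp only [Real.cos_pi, Real.sin_pi, Real.cos_zero, Real.sin_zero,
    Real.cos_pi_div_two, Real.sin_pi_div_two, Real.cos_neg, Real.sin_neg,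
    Complex.normSq_apply, Complex.add_re, Complex.add_im, Complex.sub_re, Complex.sub_im,
    Complex.mul_re, Complex.mul_im, Complex.ofReal_re, Complex.ofReal_im,
    Complex.I_re, Complex.I_im, Complex.ofReal_zero, Complex.ofReal_one,
    Complex.ofReal_neg, Complex.one_re, Complex.one_im, Complex.zero_re, Complex.zero_im,
    Complex.neg_re, Complex.neg_im] at h0 h1 h2 h3
  ring_nf at h0 h1 h2 h3
  have hs2 : Real.sqrt 2 ^ 2 = 2 := Real.sq_sqrt (by norm_num)
  have hs1 : 1 < Real.sqrt 2 := by
    nlinarith [hs2, Real.sqrt_nonneg 2]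
  have hre : c.re = 0 := by nlinarith [h0, h1, hs1]
  have him : c.im = 0 := by nlinarith [h2, h3, hs1]
  nlinarith [h0, hs2, hs1, hre, him]
end
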